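/- Let (X_n) be a Markov chain on Ω with a drift function f satisfying condition (D): E_x[f(X₁)] ≤ f(x) − λ₁ whenever f(x) > R₀, and (M_η): E_x[|f(X₁)−f(x)|^{1+η}] < M for all x, with η ∈ (0,1). Then for all x ∈ Ω with f(x) > R₀, E_x[f(X₁)^{1+η}] ≤ f(x)^{1+η} − (1+η)λ₁ f(x)^η + M. -/

import Mathlib

open MeasureTheory Set Filter
open scoped ENNReal

lemma rpow_subadd {q x y : ℝ} (hq0 : 0 ≤ q) (hq1 : q ≤ 1) (hx : 0 ≤ x) (hy : 0 ≤ y) :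
    (x + y) ^ q ≤ x ^ q + y ^ q := by
  have h := NNReal.rpow_add_le_add_rpow x.toNNReal y.toNNReal hq0 hq1
  have h2 := NNReal.coe_le_coe.2 h
  push_cast at h2
  rwa [Real.coe_toNNReal x hx, Real.coe_toNNReal y hy] at h2

lemma key_ineq {η : ℝ} (hη0 : 0 < η) (hη1 : η < 1) {a b : ℝ} (ha : 0 ≤ a) (hb : 0 ≤ b) :
    b ^ (1 + η) ≤ a ^ (1 + η) + (1 + η) * a ^ η * (b - a) + |b - a| ^ (1 + η) := by
  set p : ℝ := 1 + η with hp_def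
  have hp1 : (1:ℝ) ≤ p := by simp [hp_def]; linarith
  have hp0 : (0:ℝ) < p := by linarith
  have hpm1 : p - 1 = η := by ring
  rcases le_or_gt a b with hab | hab
  · -- case a ≤ b
    have habs : |b - a| = b - a := abs_of_nonneg (by linarith)
    set F : ℝ → ℝ := fun t => a ^ p + p * a ^ η * (t - a) + (t - a) ^ p - t ^ p with hF
    have hd : ∀ t : ℝ, HasDerivAt F (p * a ^ η + p * (t - a) ^ η - p * t ^ η) t := by
      intro t
      have h1 : HasDerivAt (fun t : ℝ => (t - a) ^ p) (1 * p * (t - a) ^ (p - 1)) t :=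
        ((hasDerivAt_id t).sub_const a).rpow_const (Or.inr hp1)
      have h2 : HasDerivAt (fun t : ℝ => t ^ p) (1 * p * t ^ (p - 1)) t :=
        (hasDerivAt_id t).rpow_const (Or.inr hp1)
      have h3 : HasDerivAt (fun t : ℝ => p * a ^ η * (t - a)) (p * a ^ η * 1) t :=
        ((hasDerivAt_id t).sub_const a).const_mul _
      have := (((h3.const_add (a ^ p)).add h1).sub h2)
      have e : p * a ^ η * 1 + 1 * p * (t - a) ^ (p - 1) - 1 * p * t ^ (p - 1)
          = p * a ^ η + p * (t - a) ^ η - p * t ^ η := by rw [hpm1]; ring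
      rwa [e] at this
    have hmono : MonotoneOn F (Set.Ici a) := by
      apply monotoneOn_of_deriv_nonneg (convex_Ici a)
      · exact fun t _ => ((hd t).continuousAt).continuousWithinAt
      · exact fun t _ => ((hd t).differentiableAt).differentiableWithinAt
      · intro t ht
        rw [interior_Ici] at ht
        rw [(hd t).deriv]
        have hsub : t ^ η ≤ a ^ η + (t - a) ^ η := by
          have := rpow_subadd (le_of_lt hη0) (le_of_lt hη1) ha (by linarith [(Set.mem_Ioi.1 ht).le] : (0:ℝ) ≤ t - a)
          simpa using this
        nlinarith [hsub, hp0]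
    have hFa : F a = 0 := by
      simp [hF, Real.zero_rpow (ne_of_gt hp0)]
    have := hmono (Set.self_mem_Ici) (Set.mem_Ici.2 hab) hab
    rw [hFa] at this
    have hFb : 0 ≤ a ^ p + p * a ^ η * (b - a) + (b - a) ^ p - b ^ p := this
    rw [habs]
    linarith
  · -- case b < a
    have habs : |b - a| = a - b := by rw [abs_of_nonpos (by linarith : b - a ≤ 0)]; ring
    set G : ℝ → ℝ := fun t => a ^ p + p * a ^ η * (t - a) + (a - t) ^ p - t ^ p with hG
    have hd : ∀ t : ℝ, HasDerivAt G (p * a ^ η - p * (a - t) ^ η - p * t ^ η) t := by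
      intro t
      have h1 : HasDerivAt (fun t : ℝ => (a - t) ^ p) ((-1) * p * (a - t) ^ (p - 1)) t :=
        ((hasDerivAt_id t).const_sub a).rpow_const (Or.inr hp1)
      have h2 : HasDerivAt (fun t : ℝ => t ^ p) (1 * p * t ^ (p - 1)) t :=
        (hasDerivAt_id t).rpow_const (Or.inr hp1)
      have h3 : HasDerivAt (fun t : ℝ => p * a ^ η * (t - a)) (p * a ^ η * 1) t :=
        ((hasDerivAt_id t).sub_const a).const_mul _
      have := (((h3.const_add (a ^ p)).add h1).sub h2)
      have e : p * a ^ η * 1 + (-1) * p * (a - t) ^ (p - 1) - 1 * p * t ^ (p - 1)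
          = p * a ^ η - p * (a - t) ^ η - p * t ^ η := by rw [hpm1]; ring
      rwa [e] at this
    have hanti : AntitoneOn G (Set.Icc b a) := by
      apply antitoneOn_of_deriv_nonpos (convex_Icc b a)
      · exact fun t _ => ((hd t).continuousAt).continuousWithinAt
      · exact fun t _ => ((hd t).differentiableAt).differentiableWithinAt
      · intro t ht
        rw [interior_Icc] at ht
        rw [(hd t).deriv]
        have ht0 : (0:ℝ) ≤ t := le_of_lt (lt_of_le_of_lt hb ht.1)
        have hta : (0:ℝ) ≤ a - t := by linarith [ht.2.le]
        have hsub : a ^ η ≤ t ^ η + (a - t) ^ η := by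
          have := rpow_subadd (le_of_lt hη0) (le_of_lt hη1) ht0 hta
          simpa using this
        nlinarith [hsub, hp0]
    have hGa : G a = 0 := by
      simp [hG, Real.zero_rpow (ne_of_gt hp0)]
    have := hanti (Set.mem_Icc.2 ⟨le_refl b, hab.le⟩) (Set.mem_Icc.2 ⟨hab.le, le_refl a⟩) hab.le
    rw [hGa] at this
    have hGb : 0 ≤ a ^ p + p * a ^ η * (b - a) + (a - b) ^ p - b ^ p := this
    rw [habs]
    linarith

/-- Markov chain family: see the paper, Section 2. -/
def IsMarkovChainFamily {Ω : Type*} [MeasurableSpace Ω] (P : Ω → Measure (ℕ → Ω)) : Prop :=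
  (∀ x, IsProbabilityMeasure (P x)) ∧
  (∀ x, P x {ω | ω 0 = x} = 1) ∧
  (∀ (x : Ω) (n : ℕ) (B : Set (ℕ → Ω)), MeasurableSet B →
    ∀ C : Set (ℕ → Ω), MeasurableSet C →
      (∀ ω ω' : ℕ → Ω, (∀ k ≤ n, ω k = ω' k) → (ω ∈ C ↔ ω' ∈ C)) →
      P x (C ∩ {ω | (fun k => ω (n + k)) ∈ B}) = ∫⁻ ω in C, P (ω n) B ∂ P x)

/-- Under (D) and (M_η): for every `x` with `f(x) > R₀`,
`E_x[f(X₁)^{1+η}] ≤ f(x)^{1+η} − (1+η) λ₁ f(x)^η + M`. -/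
theorem stmt7 {Ω : Type*} [MeasurableSpace Ω] (P : Ω → Measure (ℕ → Ω))
    (hP : IsMarkovChainFamily P)
    (f : Ω → ℝ) (hf : Measurable f) (hf0 : ∀ x, 0 ≤ f x)
    (η : ℝ) (hη : η ∈ Set.Ioo (0:ℝ) 1)
    (R₀ lam₁ M : ℝ) (hR₀ : 0 < R₀) (hlam₁ : 0 < lam₁) (hM : 0 < M)
    (hdrift : ∀ x, R₀ < f x →
      ∫⁻ ω, ENNReal.ofReal (f (ω 1)) ∂ P x ≤ ENNReal.ofReal (f x - lam₁))
    (hMη : ∀ x, ∫⁻ ω, ENNReal.ofReal (|f (ω 1) - f x| ^ (1 + η)) ∂ P x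
      < ENNReal.ofReal M) :
    ∀ x, R₀ < f x →
      ∫⁻ ω, ENNReal.ofReal (f (ω 1) ^ (1 + η)) ∂ P x
        ≤ ENNReal.ofReal (f x ^ (1 + η) - (1 + η) * lam₁ * f x ^ η + M) := by
  intro x hx
  obtain ⟨hη0, hη1⟩ := hη
  haveI : IsProbabilityMeasure (P x) := hP.1 x
  set a : ℝ := f x with ha_def
  have ha : 0 < a := lt_trans hR₀ hx
  set p : ℝ := 1 + η with hp_def
  have hp0 : (0:ℝ) < p := by positivity
  have m1 : Measurable fun ω : ℕ → Ω => f (ω 1) := hf.comp (measurable_pi_apply 1)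
  by_cases hcase : lam₁ ≤ a
  · -- main case
    set c : ℝ := p * a ^ η * a with hc_def
    have hcnn : 0 ≤ c := by positivity
    have haη : (0:ℝ) ≤ a ^ η := by positivity
    have hpaη : (0:ℝ) ≤ p * a ^ η := by positivity
    -- pointwise key inequality
    have hpt : ∀ ω : ℕ → Ω,
        ENNReal.ofReal (f (ω 1) ^ p) + ENNReal.ofReal c
          ≤ ENNReal.ofReal (a ^ p) + ENNReal.ofReal (p * a ^ η) * ENNReal.ofReal (f (ω 1))
            + ENNReal.ofReal (|f (ω 1) - a| ^ p) := by
      intro ω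
      set b : ℝ := f (ω 1)
      have hb : 0 ≤ b := hf0 _
      have hkey := key_ineq hη0 hη1 ha.le hb
      have h1 : b ^ p + c ≤ a ^ p + p * a ^ η * b + |b - a| ^ p := by
        rw [hc_def]; rw [hp_def] at *; nlinarith [hkey]
      calc ENNReal.ofReal (b ^ p) + ENNReal.ofReal c
          = ENNReal.ofReal (b ^ p + c) := by
            rw [ENNReal.ofReal_add (by positivity) hcnn]
        _ ≤ ENNReal.ofReal (a ^ p + p * a ^ η * b + |b - a| ^ p) :=
            ENNReal.ofReal_le_ofReal h1
        _ = ENNReal.ofReal (a ^ p) + ENNReal.ofReal (p * a ^ η) * ENNReal.ofReal b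
            + ENNReal.ofReal (|b - a| ^ p) := by
            rw [ENNReal.ofReal_add (by positivity) (by positivity),
              ENNReal.ofReal_add (by positivity) (by positivity),
              ENNReal.ofReal_mul hpaη]
    -- measurable pieces
    have mb : Measurable fun ω : ℕ → Ω => ENNReal.ofReal (f (ω 1)) :=
      ENNReal.measurable_ofReal.comp m1
    have mabs : Measurable fun ω : ℕ → Ω => ENNReal.ofReal (|f (ω 1) - a| ^ p) :=
      ENNReal.measurable_ofReal.comp
        ((Real.continuous_rpow_const hp0.le).measurable.comp ((m1.sub measurable_const).abs))
    have hchain :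
        (∫⁻ ω, ENNReal.ofReal (f (ω 1) ^ p) ∂ P x) + ENNReal.ofReal c
          ≤ ENNReal.ofReal (a ^ p - p * lam₁ * a ^ η + M) + ENNReal.ofReal c := by
      calc (∫⁻ ω, ENNReal.ofReal (f (ω 1) ^ p) ∂ P x) + ENNReal.ofReal c
          = ∫⁻ ω, (ENNReal.ofReal (f (ω 1) ^ p) + ENNReal.ofReal c) ∂ P x := by
            rw [lintegral_add_right _ measurable_const, lintegral_const, measure_univ, mul_one]
        _ ≤ ∫⁻ ω, (ENNReal.ofReal (a ^ p)
              + ENNReal.ofReal (p * a ^ η) * ENNReal.ofReal (f (ω 1))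
              + ENNReal.ofReal (|f (ω 1) - a| ^ p)) ∂ P x :=
            lintegral_mono hpt
        _ = ENNReal.ofReal (a ^ p)
              + ENNReal.ofReal (p * a ^ η) * (∫⁻ ω, ENNReal.ofReal (f (ω 1)) ∂ P x)
              + ∫⁻ ω, ENNReal.ofReal (|f (ω 1) - a| ^ p) ∂ P x := by
            rw [lintegral_add_right _ mabs, lintegral_add_right _ (mb.const_mul _),
              lintegral_const, measure_univ, mul_one, lintegral_const_mul _ mb]
        _ ≤ ENNReal.ofReal (a ^ p)
              + ENNReal.ofReal (p * a ^ η) * ENNReal.ofReal (a - lam₁)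
              + ENNReal.ofReal M := by
            gcongr
            · exact hdrift x hx
            · exact (hMη x).le
        _ = ENNReal.ofReal (a ^ p + p * a ^ η * (a - lam₁) + M) := by
            have h4 : (0:ℝ) ≤ a - lam₁ := by linarith
            have h5 : (0:ℝ) ≤ p * a ^ η * (a - lam₁) := mul_nonneg hpaη h4
            rw [ENNReal.ofReal_add (add_nonneg (by positivity) h5) hM.le,
              ENNReal.ofReal_add (by positivity) h5,
              ENNReal.ofReal_mul hpaη]
        _ = ENNReal.ofReal ((a ^ p - p * lam₁ * a ^ η + M) + c) := by
            rw [hc_def]; ring_nf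
        _ ≤ ENNReal.ofReal (a ^ p - p * lam₁ * a ^ η + M) + ENNReal.ofReal c :=
            ENNReal.ofReal_add_le
    exact (ENNReal.add_le_add_iff_right ENNReal.ofReal_ne_top).mp hchain
  · -- degenerate case: a < lam₁, drift forces f (ω 1) = 0 a.e.
    push_neg at hcase
    have h0 : (∫⁻ ω, ENNReal.ofReal (f (ω 1)) ∂ P x) = 0 := by
      have := hdrift x hx
      have hneg : ENNReal.ofReal (a - lam₁) = 0 := by
        rw [ENNReal.ofReal_eq_zero]; linarith
      rw [hneg] at this
      exact le_antisymm this zero_le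
    have mb : Measurable fun ω : ℕ → Ω => ENNReal.ofReal (f (ω 1)) :=
      ENNReal.measurable_ofReal.comp m1
    have hae : ∀ᵐ ω ∂ P x, ENNReal.ofReal (f (ω 1)) = 0 :=
      (lintegral_eq_zero_iff mb).mp h0
    have hae2 : ∀ᵐ ω ∂ P x, ENNReal.ofReal (f (ω 1) ^ p) = 0 := by
      filter_upwards [hae] with ω hω
      rw [ENNReal.ofReal_eq_zero] at hω ⊢
      have : f (ω 1) = 0 := le_antisymm (by rwa [] at hω) (hf0 _)
      rw [this, Real.zero_rpow (ne_of_gt hp0)]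
    rw [lintegral_congr_ae hae2, lintegral_zero]
    exact zero_le
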